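/- (Embedded logical X operators are not stabilizers.) Let x ∈ F₂^V satisfy H·x = 0 and x ≠ 0, and let y ∈ F₂^V not lie in the row space of H. Then the vector (x ⊗ y | 0) ∈ F₂^((V × V) ⊕ (C × C)) (supported on the VV qubits) does not lie in the row space of H_X. Likewise, if x' ∈ F₂^C satisfies Hᵗ·x' = 0 and x' ≠ 0, and y' ∈ F₂^C does not lie in the row space of Hᵗ, then (0 | y' ⊗ x') does not lie in the row space of H_X. -/

import Mathlib

open Matrix Kronecker

variable {V C : Type*} [Fintype V] [Fintype C] [DecidableEq V] [DecidableEq C]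

/-- X-stabilizer matrix `H_X = (1_V ⊗ H | Hᵗ ⊗ 1_C)` of the hypergraph product of `H`
with itself. Rows are indexed by `V × C`, column blocks by `V × V` and `C × C`. -/
def HX (H : Matrix C V (ZMod 2)) : Matrix (V × C) ((V × V) ⊕ (C × C)) (ZMod 2) :=
  Matrix.fromCols ((1 : Matrix V V (ZMod 2)) ⊗ₖ H) (Hᵀ ⊗ₖ (1 : Matrix C C (ZMod 2)))

/-- Z-stabilizer matrix `H_Z = (H ⊗ 1_V | 1_C ⊗ Hᵗ)`. Rows are indexed by `C × V`. -/
def HZ (H : Matrix C V (ZMod 2)) : Matrix (C × V) ((V × V) ⊕ (C × C)) (ZMod 2) :=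
  Matrix.fromCols (H ⊗ₖ (1 : Matrix V V (ZMod 2))) ((1 : Matrix C C (ZMod 2)) ⊗ₖ Hᵀ)

lemma HX_vecMul_inl (H : Matrix C V (ZMod 2)) (a : V × C → ZMod 2) (v1 : V) (v2 : V) :
    Matrix.vecMul a (HX H) (Sum.inl (v1, v2)) = ∑ c, a (v1, c) * H c v2 := by
  simp [HX, Matrix.vecMul, dotProduct, Matrix.fromCols, Matrix.kroneckerMap_apply,
    Fintype.sum_prod_type, Matrix.one_apply]

lemma HX_vecMul_inr (H : Matrix C V (ZMod 2)) (a : V × C → ZMod 2) (c1 : C) (c2 : C) :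
    Matrix.vecMul a (HX H) (Sum.inr (c1, c2)) = ∑ v, a (v, c2) * H c1 v := by
  simp [HX, Matrix.vecMul, dotProduct, Matrix.fromCols, Matrix.kroneckerMap_apply,
    Fintype.sum_prod_type, Matrix.one_apply, mul_comm]

lemma zmod2_ne_zero {t : ZMod 2} (h : t ≠ 0) : t = 1 := by revert h; revert t; decide

/-- Embedded logical X operators are not stabilizers. -/
theorem stmt_2 (H : Matrix C V (ZMod 2)) :
    (∀ x y : V → ZMod 2, H.mulVec x = 0 → x ≠ 0 →
      (¬ ∃ b : C → ZMod 2, Matrix.vecMul b H = y) →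
      ¬ ∃ a : V × C → ZMod 2, Matrix.vecMul a (HX H) =
        Sum.elim (fun p : V × V => x p.1 * y p.2) (fun _ : C × C => 0)) ∧
    (∀ x' y' : C → ZMod 2, Hᵀ.mulVec x' = 0 → x' ≠ 0 →
      (¬ ∃ b : V → ZMod 2, Matrix.vecMul b Hᵀ = y') →
      ¬ ∃ a : V × C → ZMod 2, Matrix.vecMul a (HX H) =
        Sum.elim (fun _ : V × V => 0) (fun p : C × C => y' p.1 * x' p.2)) := by
  constructor
  · intro x y _ hx hy ⟨a, ha⟩
    obtain ⟨v1, hv1⟩ := Function.ne_iff.mp hx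
    have hv1' : x v1 = 1 := zmod2_ne_zero hv1
    apply hy
    refine ⟨fun c => a (v1, c), funext fun v2 => ?_⟩
    have := congrFun ha (Sum.inl (v1, v2))
    rw [HX_vecMul_inl] at this
    simpa [Matrix.vecMul, dotProduct, hv1'] using this
  · intro x' y' _ hx hy ⟨a, ha⟩
    obtain ⟨c2, hc2⟩ := Function.ne_iff.mp hx
    have hc2' : x' c2 = 1 := zmod2_ne_zero hc2
    apply hy
    refine ⟨fun v => a (v, c2), funext fun c1 => ?_⟩
    have := congrFun ha (Sum.inr (c1, c2))
    rw [HX_vecMul_inr] at this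
    simpa [Matrix.vecMul, dotProduct, Matrix.transpose_apply, hc2'] using this
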